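/- Let X be a compact metric space and T : X → X an injective continuous map, and let d ≥ 0 be an integer. Then the set C_3 of pairs (x,y) ∈ X×X such that exactly one of x, y is periodic can be covered by countably many compact sets of the form Ū_x × Ū_y, where y is periodic of some period n, x is non-periodic, Ū_y ⊂ H_n, Ū_x ⊂ X ∖ P_n, and the sets Ū_x, TŪ_x, …, T^{2d}Ū_x, Ū_y, TŪ_y, …, T^{min(n−1,2d)}Ū_y are pairwise disjoint (together with the symmetric products Ū_y × Ū_x). -/

import Mathlib

open Function Set Topology

/-- The set of periodic points of `T` of period at most `n`. -/
def periodicLE {X : Type*} (T : X → X) (n : ℕ) : Set X :=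
  {x | ∃ p, 1 ≤ p ∧ p ≤ n ∧ T^[p] x = x}

/-- The set of all periodic points of `T`. -/
def periodicPtsSet {X : Type*} (T : X → X) : Set X :=
  {x | ∃ p, 1 ≤ p ∧ T^[p] x = x}

open Metric

lemma periodicLE_subset {X : Type*} (T : X → X) (n : ℕ) :
    periodicLE T n ⊆ periodicPtsSet T := fun _ ⟨p, h1, _, h3⟩ => ⟨p, h1, h3⟩

lemma isClosed_periodicLE {X : Type*} [MetricSpace X] (T : X → X) (hTc : Continuous T) (n : ℕ) :
    IsClosed (periodicLE T n) := by
  have h : periodicLE T n = ⋃ p ∈ Finset.Icc 1 n, {x | T^[p] x = x} := by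
    ext x; simp [periodicLE, Finset.mem_Icc, and_assoc]
  rw [h]
  exact isClosed_biUnion_finset fun p _ => isClosed_eq (hTc.iterate p) continuous_id

lemma iter_eq_self_of_iter_eq {X : Type*} {T : X → X} (hTi : Injective T) {w : X} {a b : ℕ}
    (hab : a ≤ b) (h : T^[a] w = T^[b] w) : T^[b - a] w = w := by
  apply hTi.iterate a
  rw [← Function.iterate_add_apply, Nat.add_sub_cancel' hab]
  exact h.symm

lemma pts_injective {X : Type*} {T : X → X} (hTi : Injective T) (d n : ℕ)
    {x y : X} (hx : x ∉ periodicPtsSet T)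
    (hy : y ∈ periodicLE T (n + 1) \ periodicLE T n) :
    Injective (Sum.elim (fun k : Fin (2 * d + 1) => T^[(k : ℕ)] x)
      (fun k : Fin (min n (2 * d) + 1) => T^[(k : ℕ)] y)) := by
  obtain ⟨p, hp1, hpn, hpy⟩ := hy.1
  have hxy : ∀ i j : ℕ, T^[i] x ≠ T^[j] y := by
    intro i j h
    apply hx
    refine ⟨p, hp1, hTi.iterate i ?_⟩
    calc T^[i] (T^[p] x) = T^[p] (T^[i] x) := by
          rw [← Function.iterate_add_apply, ← Function.iterate_add_apply, Nat.add_comm]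
      _ = T^[p] (T^[j] y) := by rw [h]
      _ = T^[j] (T^[p] y) := by
          rw [← Function.iterate_add_apply, ← Function.iterate_add_apply, Nat.add_comm]
      _ = T^[i] x := by rw [hpy, h]
  rintro (i | i) (j | j) h
  · simp only [Sum.elim_inl] at h
    congr 1
    by_contra hij
    rcases Nat.lt_or_ge (i : ℕ) (j : ℕ) with hlt | hge
    · exact hx ⟨(j : ℕ) - i, by omega, iter_eq_self_of_iter_eq hTi (le_of_lt hlt) h⟩
    · have hlt : (j : ℕ) < i := by
        rcases Nat.lt_or_ge (j : ℕ) (i : ℕ) with h' | h'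
        · exact h'
        · exact absurd (Fin.ext (le_antisymm h' hge) : _ = _) hij
      exact hx ⟨(i : ℕ) - j, by omega, iter_eq_self_of_iter_eq hTi (le_of_lt hlt) h.symm⟩
  · exact absurd h (hxy _ _)
  · exact absurd h.symm (hxy _ _)
  · simp only [Sum.elim_inr] at h
    congr 1
    by_contra hij
    have hbound : ∀ a b : Fin (min n (2 * d) + 1), (a : ℕ) < (b : ℕ) →
        T^[(a : ℕ)] y ≠ T^[(b : ℕ)] y := by
      intro a b hab hab'
      have h1 : T^[(b : ℕ) - a] y = y := iter_eq_self_of_iter_eq hTi (le_of_lt hab) hab'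
      have hb : (b : ℕ) ≤ min n (2 * d) := Nat.lt_succ_iff.mp b.isLt
      exact hy.2 ⟨(b : ℕ) - a, by omega, by omega, h1⟩
    rcases Nat.lt_or_ge (i : ℕ) (j : ℕ) with hlt | hge
    · exact hbound i j hlt h
    · have hlt : (j : ℕ) < i := by
        rcases Nat.lt_or_ge (j : ℕ) (i : ℕ) with h' | h'
        · exact h'
        · exact absurd (Fin.ext (le_antisymm h' hge) : _ = _) hij
      exact hbound j i hlt h.symm

lemma exists_sep {ι : Type*} [Fintype ι] [DecidableEq ι] [Nontrivial ι]
    {X : Type*} [MetricSpace X] (g : ι → X → X) (hg : ∀ i, Continuous (g i)) (base : ι → X)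
    (hinj : Injective (fun i => g i (base i))) :
    ∃ ε > 0, Pairwise (Disjoint on fun i => g i '' closedBall (base i) ε) := by
  set pts : ι → X := fun i => g i (base i) with hpts
  have hne : (Finset.univ.filter (fun p : ι × ι => p.1 ≠ p.2)).Nonempty := by
    obtain ⟨a, b, hab⟩ := exists_pair_ne ι
    exact ⟨(a, b), Finset.mem_filter.2 ⟨Finset.mem_univ _, hab⟩⟩
  set δ : ℝ := (Finset.univ.filter (fun p : ι × ι => p.1 ≠ p.2)).inf' hne
    (fun p => dist (pts p.1) (pts p.2)) with hδ
  have hδpos : 0 < δ := by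
    rw [hδ, Finset.lt_inf'_iff]
    rintro ⟨i, j⟩ hij
    simp only [Finset.mem_filter] at hij
    exact dist_pos.2 fun h => hij.2 (hinj h)
  have hδle : ∀ i j : ι, i ≠ j → δ ≤ dist (pts i) (pts j) := by
    intro i j hij
    rw [hδ]
    exact Finset.inf'_le (fun p : ι × ι => dist (pts p.1) (pts p.2))
      (Finset.mem_filter.2 ⟨Finset.mem_univ ((i, j) : ι × ι), hij⟩)
  have hcont : ∀ i : ι, ∃ η > 0, ∀ ⦃w : X⦄, dist w (base i) < η →
      dist (g i w) (pts i) < δ / 2 := by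
    intro i
    exact Metric.continuousAt_iff.1 ((hg i).continuousAt) (δ / 2) (by linarith)
  choose η hηpos hηspec using hcont
  rcases isEmpty_or_nonempty ι with hι | hι
  · exact ⟨1, one_pos, fun i => (hι.false i).elim⟩
  set ε0 : ℝ := Finset.univ.inf' Finset.univ_nonempty η with hε0
  have hε0pos : 0 < ε0 := by
    rw [hε0, Finset.lt_inf'_iff]
    exact fun i _ => hηpos i
  refine ⟨ε0 / 2, by linarith, ?_⟩
  have himg : ∀ i : ι, g i '' closedBall (base i) (ε0 / 2) ⊆ ball (pts i) (δ / 2) := by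
    rintro i _ ⟨w, hw, rfl⟩
    have h1 : dist w (base i) < η i := by
      have h2 : ε0 ≤ η i := by
        rw [hε0]; exact Finset.inf'_le η (Finset.mem_univ _)
      have := mem_closedBall.1 hw
      linarith
    exact hηspec i h1
  intro i j hij
  refine Set.disjoint_of_subset (himg i) (himg j) (Metric.ball_disjoint_ball ?_)
  have := hδle i j hij
  linarith

lemma key_lemma {X : Type*} [MetricSpace X] [CompactSpace X] (T : X → X) (hTc : Continuous T)
    (hTi : Injective T) (d n : ℕ) (x y : X) (hx : x ∉ periodicPtsSet T)
    (hy : y ∈ periodicLE T (n + 1) \ periodicLE T n) :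
    ∃ ε > 0, closedBall y ε ∩ periodicLE T (n + 1) ⊆ periodicLE T (n + 1) \ periodicLE T n ∧
      closedBall x ε ⊆ (periodicLE T (n + 1))ᶜ ∧
      Pairwise (Disjoint on (Sum.elim
        (fun k : Fin (2 * d + 1) => T^[(k : ℕ)] '' closedBall x ε)
        (fun k : Fin (min n (2 * d) + 1) =>
          T^[(k : ℕ)] '' (closedBall y ε ∩ periodicLE T (n + 1))))) := by
  classical
  have : Nontrivial (Fin (2 * d + 1) ⊕ Fin (min n (2 * d) + 1)) :=
    ⟨⟨Sum.inl 0, Sum.inr 0, by simp⟩⟩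
  obtain ⟨ε1, hε1pos, hsep⟩ := exists_sep
    (ι := Fin (2 * d + 1) ⊕ Fin (min n (2 * d) + 1))
    (fun i => T^[Sum.elim Fin.val Fin.val i]) (fun i => hTc.iterate _)
    (Sum.elim (fun _ => x) (fun _ => y))
    (by
      have h := pts_injective hTi d n hx hy
      have he : (fun i : Fin (2 * d + 1) ⊕ Fin (min n (2 * d) + 1) =>
          T^[Sum.elim Fin.val Fin.val i] (Sum.elim (fun _ => x) (fun _ => y) i)) =
          Sum.elim (fun k : Fin (2 * d + 1) => T^[(k : ℕ)] x)
            (fun k : Fin (min n (2 * d) + 1) => T^[(k : ℕ)] y) := by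
        funext i; cases i <;> rfl
      rw [he]; exact h)
  have hx' : x ∈ (periodicLE T (n + 1))ᶜ := fun h => hx (periodicLE_subset T (n + 1) h)
  obtain ⟨r1, hr1pos, hr1⟩ := Metric.isOpen_iff.1
    (isClosed_periodicLE T hTc (n + 1)).isOpen_compl x hx'
  obtain ⟨r2, hr2pos, hr2⟩ := Metric.isOpen_iff.1
    (isClosed_periodicLE T hTc n).isOpen_compl y hy.2
  set ε : ℝ := min (min ε1 r1) r2 / 2 with hε
  have hm : 0 < min (min ε1 r1) r2 := lt_min (lt_min hε1pos hr1pos) hr2pos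
  have hεpos : 0 < ε := by rw [hε]; linarith
  have hεε1 : ε ≤ ε1 := by
    have h1 : min (min ε1 r1) r2 ≤ ε1 := le_trans (min_le_left _ _) (min_le_left _ _)
    rw [hε]; linarith
  have hεr1 : ε < r1 := by
    have h1 : min (min ε1 r1) r2 ≤ r1 := le_trans (min_le_left _ _) (min_le_right _ _)
    rw [hε]; linarith
  have hεr2 : ε < r2 := by
    have h1 : min (min ε1 r1) r2 ≤ r2 := min_le_right _ _
    rw [hε]; linarith
  refine ⟨ε, hεpos, ?_, ?_, ?_⟩
  · rintro w ⟨hw1, hw2⟩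
    exact ⟨hw2, hr2 (closedBall_subset_ball hεr2 hw1)⟩
  · exact fun w hw => hr1 (closedBall_subset_ball hεr1 hw)
  · intro i j hij
    have hsub : ∀ i : Fin (2 * d + 1) ⊕ Fin (min n (2 * d) + 1), Sum.elim
        (fun k : Fin (2 * d + 1) => T^[(k : ℕ)] '' closedBall x ε)
        (fun k : Fin (min n (2 * d) + 1) =>
          T^[(k : ℕ)] '' (closedBall y ε ∩ periodicLE T (n + 1))) i ⊆
        T^[Sum.elim Fin.val Fin.val i] ''
          closedBall (Sum.elim (fun _ => x) (fun _ => y) i) ε1 := by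
      rintro (k | k)
      · exact Set.image_mono (closedBall_subset_closedBall hεε1)
      · exact Set.image_mono
          ((Set.inter_subset_left).trans (closedBall_subset_closedBall hεε1))
    exact Set.disjoint_of_subset (hsub i) (hsub j) (hsep hij)

theorem stmt6 {X : Type*} [MetricSpace X] [CompactSpace X]
    (T : X → X) (hTc : Continuous T) (hTi : Function.Injective T) (d : ℕ) :
    ∃ K : ℕ → Set (X × X),
      -- the sets `K i` cover `C₃`, the set of pairs in which exactly one
      -- coordinate is periodic
      {p : X × X | Xor' (p.1 ∈ periodicPtsSet T) (p.2 ∈ periodicPtsSet T)} ⊆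
        ⋃ i, K i ∧
      -- each `K i` is a product `Ū_x × Ū_y` (or the symmetric `Ū_y × Ū_x`) of
      -- compact sets with `Ū_y ⊆ H_n`, `Ū_x ⊆ X ∖ P_n`, and
      -- `Ū_x, TŪ_x, …, T^{2d}Ū_x, Ū_y, TŪ_y, …, T^{min(n-1,2d)}Ū_y`
      -- pairwise disjoint
      ∀ i, ∃ (n : ℕ) (A B : Set X), 1 ≤ n ∧
        IsCompact A ∧ IsCompact B ∧
        B ⊆ periodicLE T n \ periodicLE T (n - 1) ∧
        A ⊆ (periodicLE T n)ᶜ ∧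
        Pairwise (Disjoint on
          (Sum.elim (fun k : Fin (2 * d + 1) => T^[(k : ℕ)] '' A)
                    (fun k : Fin (min (n - 1) (2 * d) + 1) => T^[(k : ℕ)] '' B))) ∧
        (K i = A ×ˢ B ∨ K i = B ×ˢ A) := by
  classical
  set S : ℕ → Set (X × X) := fun n =>
    {z | z.1 ∉ periodicPtsSet T ∧ z.2 ∈ periodicLE T (n + 1) \ periodicLE T n} with hS
  have key : ∀ (n : ℕ) (z : X × X), ∃ ε : ℝ, 0 < ε ∧ (z ∈ S n →
      (closedBall z.2 ε ∩ periodicLE T (n + 1) ⊆ periodicLE T (n + 1) \ periodicLE T n) ∧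
      (closedBall z.1 ε ⊆ (periodicLE T (n + 1))ᶜ) ∧
      Pairwise (Disjoint on (Sum.elim
        (fun k : Fin (2 * d + 1) => T^[(k : ℕ)] '' closedBall z.1 ε)
        (fun k : Fin (min n (2 * d) + 1) =>
          T^[(k : ℕ)] '' (closedBall z.2 ε ∩ periodicLE T (n + 1)))))) := by
    intro n z
    by_cases hz : z ∈ S n
    · obtain ⟨ε, hε, h⟩ := key_lemma T hTc hTi d n z.1 z.2 hz.1 hz.2
      exact ⟨ε, hε, fun _ => h⟩
    · exact ⟨1, one_pos, fun h => absurd h hz⟩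
  choose ε hεpos hspec using key
  set A : ℕ → X × X → Set X := fun n z => closedBall z.1 (ε n z) with hA
  set B : ℕ → X × X → Set X := fun n z => closedBall z.2 (ε n z) ∩ periodicLE T (n + 1) with hB
  have hcover : ∀ n : ℕ, ∃ t ⊆ S n, t.Countable ∧
      S n ⊆ ⋃ z ∈ t, ball z.1 (ε n z) ×ˢ ball z.2 (ε n z) := by
    intro n
    apply TopologicalSpace.countable_cover_nhdsWithin
    intro z _
    exact nhdsWithin_le_nhds
      (prod_mem_nhds (ball_mem_nhds _ (hεpos n z)) (ball_mem_nhds _ (hεpos n z)))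
  choose t ht_sub ht_cnt ht_cov using hcover
  set 𝒦 : Set (Set (X × X)) :=
    insert ∅ (⋃ n, ((fun z => A n z ×ˢ B n z) '' t n ∪ (fun z => B n z ×ˢ A n z) '' t n))
    with h𝒦
  have h𝒦c : 𝒦.Countable :=
    Set.Countable.insert _
      (countable_iUnion fun n => ((ht_cnt n).image _).union ((ht_cnt n).image _))
  obtain ⟨K, hK⟩ := h𝒦c.exists_eq_range ⟨∅, mem_insert _ _⟩
  have minper : ∀ w : X, w ∈ periodicPtsSet T →
      ∃ n : ℕ, w ∈ periodicLE T (n + 1) \ periodicLE T n := by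
    intro w hw
    have hex : ∃ p, 1 ≤ p ∧ T^[p] w = w := hw
    have hm := Nat.find_spec hex
    refine ⟨Nat.find hex - 1, ⟨Nat.find hex, hm.1, by omega, hm.2⟩, ?_⟩
    rintro ⟨q, hq1, hq2, hq3⟩
    exact Nat.find_min hex (by omega : q < Nat.find hex) ⟨hq1, hq3⟩
  refine ⟨K, ?_, ?_⟩
  · -- coverage
    intro z hz
    have hsU : ⋃ i, K i = ⋃₀ 𝒦 := by rw [hK, Set.sUnion_range]
    rw [hsU]
    rcases hz with ⟨h1, h2⟩ | ⟨h1, h2⟩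
    · -- z.1 periodic, z.2 not
      obtain ⟨n, hmem⟩ := minper z.1 h1
      have hzS : ((z.2, z.1) : X × X) ∈ S n := ⟨h2, hmem⟩
      obtain ⟨u, hu, hwu⟩ := Set.mem_iUnion₂.1 (ht_cov n hzS)
      obtain ⟨hw1, hw2⟩ := hwu
      refine ⟨B n u ×ˢ A n u, ?_, ?_⟩
      · exact Set.mem_insert_of_mem _
          (Set.mem_iUnion.2 ⟨n, Or.inr ⟨u, hu, rfl⟩⟩)
      · exact ⟨⟨ball_subset_closedBall hw2, hmem.1⟩, ball_subset_closedBall hw1⟩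
    · -- z.2 periodic, z.1 not
      obtain ⟨n, hmem⟩ := minper z.2 h1
      have hzS : z ∈ S n := ⟨h2, hmem⟩
      obtain ⟨u, hu, hwu⟩ := Set.mem_iUnion₂.1 (ht_cov n hzS)
      obtain ⟨hw1, hw2⟩ := hwu
      refine ⟨A n u ×ˢ B n u, ?_, ?_⟩
      · exact Set.mem_insert_of_mem _
          (Set.mem_iUnion.2 ⟨n, Or.inl ⟨u, hu, rfl⟩⟩)
      · exact ⟨ball_subset_closedBall hw1, ⟨ball_subset_closedBall hw2, hmem.1⟩⟩
  · -- structure of each K i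
    intro i
    have hKi : K i ∈ 𝒦 := hK ▸ Set.mem_range_self i
    rcases hKi with hKe | hKm
    · -- empty case
      refine ⟨1, ∅, ∅, le_refl 1, isCompact_empty, isCompact_empty,
        empty_subset _, empty_subset _, ?_, Or.inl (by rw [hKe]; simp)⟩
      intro a b _
      have he : ∀ c : Fin (2 * d + 1) ⊕ Fin (min (1 - 1) (2 * d) + 1),
          Sum.elim (fun k : Fin (2 * d + 1) => T^[(k : ℕ)] '' (∅ : Set X))
            (fun k : Fin (min (1 - 1) (2 * d) + 1) => T^[(k : ℕ)] '' (∅ : Set X)) c = ∅ := by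
        rintro (c | c) <;> simp
      simp only [Function.onFun, he]
      exact disjoint_bot_left
    · obtain ⟨n, hn⟩ := Set.mem_iUnion.1 hKm
      have hcA : ∀ u : X × X, IsCompact (A n u) :=
        fun u => Metric.isClosed_closedBall.isCompact
      have hcB : ∀ u : X × X, IsCompact (B n u) :=
        fun u => (Metric.isClosed_closedBall.inter (isClosed_periodicLE T hTc (n + 1))).isCompact
      rcases hn with ⟨u, hu, heq⟩ | ⟨u, hu, heq⟩
      · obtain ⟨hC1, hC2, hC3⟩ := hspec n u (ht_sub n hu)
        exact ⟨n + 1, A n u, B n u, Nat.succ_le_succ (Nat.zero_le n), hcA u, hcB u,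
          hC1, hC2, hC3, Or.inl heq.symm⟩
      · obtain ⟨hC1, hC2, hC3⟩ := hspec n u (ht_sub n hu)
        exact ⟨n + 1, A n u, B n u, Nat.succ_le_succ (Nat.zero_le n), hcA u, hcB u,
          hC1, hC2, hC3, Or.inr heq.symm⟩
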